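/- A Banach space X has the p-Dunford-Pettis relatively compact property if and only if every p-Right Cauchy sequence in X is norm convergent, if and only if every subset of X that is both a Dunford-Pettis set and weakly p-compact is relatively norm compact. -/

import Mathlib

open Filter Topology Set
open scoped ENNReal

noncomputable section

/-- A sequence in a normed space is weakly null. -/
def WeaklyNull {E : Type*} [NormedAddCommGroup E] [NormedSpace ℝ E] (x : ℕ → E) : Prop :=
  ∀ φ : E →L[ℝ] ℝ, Tendsto (fun n => φ (x n)) atTop (𝓝 0)

/-- A bounded set on which every weakly null sequence of functionals converges uniformly. -/
def DunfordPettisSet {E : Type*} [NormedAddCommGroup E] [NormedSpace ℝ E] (K : Set E) : Prop :=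
  Bornology.IsBounded K ∧ ∀ f : ℕ → (E →L[ℝ] ℝ), WeaklyNull f →
    ∀ ε > 0, ∃ N : ℕ, ∀ n ≥ N, ∀ x ∈ K, |f n x| < ε

/-- Weakly `p`-summable sequence; for `p = ∞` this means weakly null. -/
def WeaklyPSummable (p : ℝ≥0∞) {E : Type*} [NormedAddCommGroup E] [NormedSpace ℝ E]
    (x : ℕ → E) : Prop :=
  if p = ∞ then WeaklyNull x else ∀ φ : E →L[ℝ] ℝ, Memℓp (fun n => φ (x n)) p

def NormNull {E : Type*} [NormedAddCommGroup E] (x : ℕ → E) : Prop :=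
  Tendsto (fun n => ‖x n‖) atTop (𝓝 0)

def PRightNull (p : ℝ≥0∞) {E : Type*} [NormedAddCommGroup E] [NormedSpace ℝ E]
    (x : ℕ → E) : Prop :=
  WeaklyPSummable p x ∧ DunfordPettisSet (Set.range x)

def WeaklyPCauchy (p : ℝ≥0∞) {E : Type*} [NormedAddCommGroup E] [NormedSpace ℝ E]
    (x : ℕ → E) : Prop :=
  ∀ k l : ℕ → ℕ, StrictMono k → StrictMono l →
    WeaklyPSummable p (fun n => x (k n) - x (l n))

def PRightCauchy (p : ℝ≥0∞) {E : Type*} [NormedAddCommGroup E] [NormedSpace ℝ E]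
    (x : ℕ → E) : Prop :=
  WeaklyPCauchy p x ∧ DunfordPettisSet (Set.range x)

/-- `p`-Dunford-Pettis relatively compact property. -/
def HasDPrcP (p : ℝ≥0∞) (E : Type*) [NormedAddCommGroup E] [NormedSpace ℝ E] : Prop :=
  ∀ x : ℕ → E, PRightNull p x → NormNull x

/-- A (not necessarily linear) map is Dunford-Pettis `p`-convergent. -/
def DPpConvergent (p : ℝ≥0∞) {E F : Type*} [NormedAddCommGroup E] [NormedSpace ℝ E]
    [NormedAddCommGroup F] (f : E → F) : Prop :=
  ∀ x : ℕ → E, PRightNull p x → NormNull (fun n => f (x n))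

/-- A map is `p`-convergent. -/
def PConvergent (p : ℝ≥0∞) {E F : Type*} [NormedAddCommGroup E] [NormedSpace ℝ E]
    [NormedAddCommGroup F] (f : E → F) : Prop :=
  ∀ x : ℕ → E, WeaklyPSummable p x → NormNull (fun n => f (x n))

/-- The adjoint of a continuous linear operator between normed spaces. -/
def opAdjoint {E F : Type*} [NormedAddCommGroup E] [NormedSpace ℝ E]
    [NormedAddCommGroup F] [NormedSpace ℝ F] (T : E →L[ℝ] F) :
    (F →L[ℝ] ℝ) →L[ℝ] (E →L[ℝ] ℝ) :=
  (ContinuousLinearMap.compL ℝ E F ℝ).flip T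


/-- `K` is weakly `p`-compact: every sequence in `K` has a weakly `p`-convergent
subsequence with limit in `K`. -/
def WeaklyPCompact (p : ℝ≥0∞) {E : Type*} [NormedAddCommGroup E] [NormedSpace ℝ E]
    (K : Set E) : Prop :=
  ∀ x : ℕ → E, (∀ n, x n ∈ K) → ∃ a ∈ K, ∃ φ : ℕ → ℕ, StrictMono φ ∧
    WeaklyPSummable p (fun n => x (φ n) - a)

open Pointwise

section helpers
variable {E : Type*} [NormedAddCommGroup E] [NormedSpace ℝ E] {p : ℝ≥0∞}

lemma memℓp_tendsto_zero (hp : 1 ≤ p) (hpt : p ≠ ∞) {f : ℕ → ℝ} (hf : Memℓp f p) :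
    Tendsto f atTop (𝓝 0) := by
  have hq : 0 < p.toReal := ENNReal.toReal_pos (zero_lt_one.trans_le hp).ne' hpt
  have h0 : Tendsto (fun n => ‖f n‖ ^ p.toReal) atTop (𝓝 0) :=
    (hf.summable hq).tendsto_atTop_zero
  have h1 : Tendsto (fun n => (‖f n‖ ^ p.toReal) ^ (p.toReal)⁻¹) atTop (𝓝 0) := by
    have := h0.rpow_const (p := (p.toReal)⁻¹) (Or.inr (by positivity))
    simpa [Real.zero_rpow (by positivity : (p.toReal)⁻¹ ≠ 0)] using this
  have h2 : (fun n => (‖f n‖ ^ p.toReal) ^ (p.toReal)⁻¹) = fun n => ‖f n‖ := by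
    funext n; exact Real.rpow_rpow_inv (norm_nonneg _) hq.ne'
  rw [h2] at h1
  exact tendsto_zero_iff_norm_tendsto_zero.mpr h1

lemma WeaklyPSummable.tendsto_apply (hp : 1 ≤ p) {x : ℕ → E} (hx : WeaklyPSummable p x)
    (φ : E →L[ℝ] ℝ) : Tendsto (fun n => φ (x n)) atTop (𝓝 0) := by
  by_cases h : p = ∞
  · rw [WeaklyPSummable, if_pos h] at hx; exact hx φ
  · rw [WeaklyPSummable, if_neg h] at hx
    exact memℓp_tendsto_zero hp h (hx φ)

lemma WeaklyPSummable.comp_injective (hp : 1 ≤ p) {x : ℕ → E} (hx : WeaklyPSummable p x)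
    {m : ℕ → ℕ} (hm : Function.Injective m) : WeaklyPSummable p (fun n => x (m n)) := by
  by_cases h : p = ∞
  · rw [WeaklyPSummable, if_pos h] at hx ⊢
    intro φ
    have hmt : Tendsto m atTop atTop := by
      rw [← Nat.cofinite_eq_atTop]; exact hm.tendsto_cofinite
    exact (hx φ).comp hmt
  · rw [WeaklyPSummable, if_neg h] at hx ⊢
    intro φ
    have hq : 0 < p.toReal := ENNReal.toReal_pos (zero_lt_one.trans_le hp).ne' h
    exact memℓp_gen (((hx φ).summable hq).comp_injective hm)

lemma WeaklyPSummable.sub' {x y : ℕ → E} (hx : WeaklyPSummable p x)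
    (hy : WeaklyPSummable p y) : WeaklyPSummable p (fun n => x n - y n) := by
  by_cases h : p = ∞
  · rw [WeaklyPSummable, if_pos h] at hx hy ⊢
    intro φ
    simpa using ((hx φ).sub (hy φ))
  · rw [WeaklyPSummable, if_neg h] at hx hy ⊢
    intro φ
    have heq : (fun n => φ (x n - y n)) = (fun n => φ (x n)) - (fun n => φ (y n)) := by
      funext n; simp [map_sub]
    rw [heq]
    exact (hx φ).sub (hy φ)

lemma weaklyPSummable_zero : WeaklyPSummable p (fun _ : ℕ => (0 : E)) := by
  by_cases h : p = ∞
  · rw [WeaklyPSummable, if_pos h]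
    intro φ; simpa using (tendsto_const_nhds : Tendsto (fun _ : ℕ => (0:ℝ)) atTop (𝓝 0))
  · rw [WeaklyPSummable, if_neg h]
    intro φ
    have : (fun _ : ℕ => φ 0) = (0 : ℕ → ℝ) := by funext n; simp
    rw [this]; exact zero_memℓp

lemma limit_eq_zero (hp : 1 ≤ p) {x : ℕ → E} (hx : WeaklyPSummable p x)
    {m : ℕ → ℕ} (hm : Function.Injective m) {a : E}
    (ha : Tendsto (fun n => x (m n)) atTop (𝓝 a)) : a = 0 := by
  apply NormedSpace.eq_zero_of_forall_dual_eq_zero ℝ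
  intro φ
  have hmt : Tendsto m atTop atTop := by
    rw [← Nat.cofinite_eq_atTop]; exact hm.tendsto_cofinite
  have h1 : Tendsto (fun n => φ (x (m n))) atTop (𝓝 (φ a)) :=
    (φ.continuous.tendsto a).comp ha
  have h2 : Tendsto (fun n => φ (x (m n))) atTop (𝓝 0) :=
    (hx.tendsto_apply hp φ).comp hmt
  exact tendsto_nhds_unique h1 h2

lemma DunfordPettisSet.subset {K L : Set E} (hK : DunfordPettisSet K) (h : L ⊆ K) :
    DunfordPettisSet L :=
  ⟨hK.1.subset h, fun f hf ε hε => (hK.2 f hf ε hε).imp fun _ hN n hn x hx => hN n hn x (h hx)⟩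

lemma dunfordPettisSet_singleton (a : E) : DunfordPettisSet {a} := by
  refine ⟨Bornology.isBounded_singleton, fun f hf ε hε => ?_⟩
  have h := hf (ContinuousLinearMap.apply ℝ ℝ a)
  obtain ⟨N, hN⟩ := (Metric.tendsto_atTop.mp h) ε hε
  refine ⟨N, fun n hn x hx => ?_⟩
  rcases hx with rfl
  simpa [Real.dist_eq] using hN n hn

lemma DunfordPettisSet.sub'' {K L : Set E} (hK : DunfordPettisSet K) (hL : DunfordPettisSet L) :
    DunfordPettisSet (K - L) := by
  refine ⟨hK.1.sub hL.1, fun f hf ε hε => ?_⟩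
  obtain ⟨N1, h1⟩ := hK.2 f hf (ε/2) (by positivity)
  obtain ⟨N2, h2⟩ := hL.2 f hf (ε/2) (by positivity)
  refine ⟨max N1 N2, fun n hn d hd => ?_⟩
  obtain ⟨a, ha, b, hb, rfl⟩ := Set.mem_sub.1 hd
  calc |f n (a - b)| = |f n a - f n b| := by rw [map_sub]
    _ ≤ |f n a| + |f n b| := abs_sub _ _
    _ < ε/2 + ε/2 := add_lt_add (h1 n (le_trans (le_max_left _ _) hn) a ha)
        (h2 n (le_trans (le_max_right _ _) hn) b hb)
    _ = ε := add_halves ε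

lemma DunfordPettisSet.insert' (a : E) {K : Set E} (hK : DunfordPettisSet K) :
    DunfordPettisSet (insert a K) := by
  refine ⟨hK.1.insert a, fun f hf ε hε => ?_⟩
  obtain ⟨N1, h1⟩ := (dunfordPettisSet_singleton a).2 f hf ε hε
  obtain ⟨N2, h2⟩ := hK.2 f hf ε hε
  refine ⟨max N1 N2, fun n hn x hx => ?_⟩
  rcases hx with rfl | hx
  · exact h1 n (le_trans (le_max_left _ _) hn) x rfl
  · exact h2 n (le_trans (le_max_right _ _) hn) x hx

end helpers

theorem stmt1 {X : Type*} [NormedAddCommGroup X] [NormedSpace ℝ X] [CompleteSpace X]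
    (p : ℝ≥0∞) (hp : 1 ≤ p) :
    (HasDPrcP p X ↔
      ∀ x : ℕ → X, PRightCauchy p x → ∃ a : X, Tendsto (fun n => x n) atTop (𝓝 a)) ∧
    (HasDPrcP p X ↔
      ∀ K : Set X, DunfordPettisSet K → WeaklyPCompact p K → IsCompact (closure K)) := by
  have compA : HasDPrcP p X →
      ∀ x : ℕ → X, PRightCauchy p x → ∃ a : X, Tendsto (fun n => x n) atTop (𝓝 a) := by
    intro H x hx
    have hcauchy : CauchySeq x := by
      by_contra hc
      rw [Metric.cauchySeq_iff] at hc
      push_neg at hc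
      obtain ⟨ε, hε, hN⟩ := hc
      choose F hF G hG hd using hN
      set R : ℕ → ℕ × ℕ := fun s =>
        Nat.rec (F 0, G 0) (fun _ q => (F (max q.1 q.2 + 1), G (max q.1 q.2 + 1))) s with hR
      set k : ℕ → ℕ := fun s => (R s).1 with hk
      set l : ℕ → ℕ := fun s => (R s).2 with hl
      have hRsucc : ∀ s, R (s + 1) = (F (max (k s) (l s) + 1), G (max (k s) (l s) + 1)) :=
        fun s => rfl
      have hkm : StrictMono k := by
        apply strictMono_nat_of_lt_succ
        intro s
        have : k (s + 1) = F (max (k s) (l s) + 1) := rfl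
        rw [this]
        exact lt_of_lt_of_le (Nat.lt_succ_of_le (le_max_left _ _)) (hF _)
      have hlm : StrictMono l := by
        apply strictMono_nat_of_lt_succ
        intro s
        have : l (s + 1) = G (max (k s) (l s) + 1) := rfl
        rw [this]
        exact lt_of_lt_of_le (Nat.lt_succ_of_le (le_max_right _ _)) (hG _)
      have hdist : ∀ s, ε ≤ dist (x (k s)) (x (l s)) := by
        intro s
        cases s with
        | zero => exact hd 0
        | succ t =>
          have h1 : k (t + 1) = F (max (k t) (l t) + 1) := rfl
          have h2 : l (t + 1) = G (max (k t) (l t) + 1) := rfl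
          rw [h1, h2]
          exact hd _
      have hwps : WeaklyPSummable p (fun n => x (k n) - x (l n)) := hx.1 k l hkm hlm
      have hdp : DunfordPettisSet (Set.range fun n => x (k n) - x (l n)) := by
        refine (hx.2.sub'' hx.2).subset ?_
        rintro _ ⟨n, rfl⟩
        exact Set.mem_sub.2 ⟨x (k n), ⟨k n, rfl⟩, x (l n), ⟨l n, rfl⟩, rfl⟩
      have hnn := H _ ⟨hwps, hdp⟩
      rw [NormNull, Metric.tendsto_atTop] at hnn
      obtain ⟨N, hN2⟩ := hnn ε hε
      have := hN2 N le_rfl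
      rw [Real.dist_eq, sub_zero, abs_of_nonneg (norm_nonneg _), ← dist_eq_norm] at this
      exact absurd this (not_lt.mpr (hdist N))
    obtain ⟨a, ha⟩ := cauchySeq_tendsto_of_complete hcauchy
    exact ⟨a, ha⟩
  have compB : (∀ x : ℕ → X, PRightCauchy p x → ∃ a : X, Tendsto (fun n => x n) atTop (𝓝 a)) →
      HasDPrcP p X := by
    intro H x hx
    have hc : PRightCauchy p x := by
      refine ⟨fun k l hk hl => ?_, hx.2⟩
      exact ((hx.1.comp_injective hp hk.injective).sub' (hx.1.comp_injective hp hl.injective))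
    obtain ⟨a, ha⟩ := H x hc
    have ha0 : a = 0 :=
      limit_eq_zero hp hx.1 (Function.injective_id) (by exact ha)
    rw [ha0] at ha
    exact tendsto_zero_iff_norm_tendsto_zero.mp ha
  have compC : HasDPrcP p X →
      ∀ K : Set X, DunfordPettisSet K → WeaklyPCompact p K → IsCompact (closure K) := by
    intro H K hDP hWPC
    have seq : IsSeqCompact (closure K) := by
      intro z hz
      have hap : ∀ n : ℕ, ∃ y ∈ K, dist (z n) y < 1/(n+1) := fun n =>
        Metric.mem_closure_iff.1 (hz n) _ (by positivity)
      choose y hyK hyd using hap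
      obtain ⟨a, haK, φ, hφ, hs⟩ := hWPC y hyK
      have hdp : DunfordPettisSet (Set.range fun n => y (φ n) - a) := by
        refine (hDP.sub'' (dunfordPettisSet_singleton a)).subset ?_
        rintro _ ⟨n, rfl⟩
        exact Set.mem_sub.2 ⟨y (φ n), hyK _, a, rfl, rfl⟩
      have hnn : NormNull (fun n => y (φ n) - a) := H _ ⟨hs, hdp⟩
      have hy : Tendsto (fun n => y (φ n)) atTop (𝓝 a) := by
        have h0 : Tendsto (fun n => y (φ n) - a) atTop (𝓝 0) :=
          tendsto_zero_iff_norm_tendsto_zero.mpr hnn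
        have := h0.add (tendsto_const_nhds (x := a))
        simpa using this
      have hzy : Tendsto (fun n => z (φ n) - y (φ n)) atTop (𝓝 0) := by
        rw [tendsto_zero_iff_norm_tendsto_zero]
        apply squeeze_zero (fun n => norm_nonneg _) (g := fun n : ℕ => 1/(n+1))
        · intro n
          rw [← dist_eq_norm]
          refine le_trans (le_of_lt (hyd (φ n))) ?_
          apply one_div_le_one_div_of_le (by positivity)
          have : (n : ℝ) ≤ (φ n : ℝ) := by exact_mod_cast (hφ.le_apply)
          linarith
        · exact tendsto_one_div_add_atTop_nhds_zero_nat
      have hz' : Tendsto (fun n => z (φ n)) atTop (𝓝 a) := by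
        have := hzy.add hy
        simpa using this
      exact ⟨a, subset_closure haK, φ, hφ, hz'⟩
    exact seq.isCompact
  have compD : (∀ K : Set X, DunfordPettisSet K → WeaklyPCompact p K → IsCompact (closure K)) →
      HasDPrcP p X := by
    intro H x hx
    set K : Set X := insert 0 (Set.range x) with hKdef
    have hK : DunfordPettisSet K := hx.2.insert' 0
    have hWPC : WeaklyPCompact p K := by
      intro y hy
      by_cases hA : ∃ c, ∃ᶠ n in atTop, y n = c
      · obtain ⟨c, hc⟩ := hA
        obtain ⟨φ, hφ, hcφ⟩ := Filter.extraction_of_frequently_atTop hc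
        refine ⟨c, by rw [← hcφ 0]; exact hy (φ 0), φ, hφ, ?_⟩
        have heq : (fun n => y (φ n) - c) = (fun _ : ℕ => (0 : X)) := by
          funext n; rw [hcφ n, sub_self]
        rw [heq]; exact weaklyPSummable_zero
      · push_neg at hA
        have hA' : ∀ c : X, ∀ᶠ n in atTop, y n ≠ c := fun c =>
          hA c
        have key : ∀ (s : Finset ℕ) (N : ℕ), ∃ n, N < n ∧ y n ≠ 0 ∧ ∀ i ∈ s, y n ≠ y i := by
          intro s N
          have h1 : ∀ᶠ n in atTop, ∀ i ∈ s, y n ≠ y i :=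
            (eventually_all_finset s).2 fun i _ => hA' (y i)
          obtain ⟨n, hn⟩ := ((eventually_gt_atTop N).and ((hA' 0).and h1)).exists
          exact ⟨n, hn.1, hn.2.1, hn.2.2⟩
        choose F hF1 hF2 hF3 using key
        set R : ℕ → ℕ × Finset ℕ := fun s =>
          Nat.rec (F ∅ 0, {F ∅ 0}) (fun _ q => (F q.2 q.1, insert (F q.2 q.1) q.2)) s with hR
        set φ : ℕ → ℕ := fun s => (R s).1 with hφdef
        have hRsucc : ∀ s, R (s + 1) = (F (R s).2 (R s).1, insert (F (R s).2 (R s).1) (R s).2) :=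
          fun s => rfl
        have hmem : ∀ s, ∀ i ≤ s, φ i ∈ (R s).2 := by
          intro s
          induction s with
          | zero =>
            intro i hi
            rw [Nat.le_zero] at hi
            subst hi
            exact Finset.mem_singleton_self _
          | succ t ih =>
            intro i hi
            rcases eq_or_lt_of_le hi with rfl | hi'
            · have : φ (t+1) = F (R t).2 (R t).1 := rfl
              rw [this, hRsucc t]
              exact Finset.mem_insert_self _ _
            · have : (R (t+1)).2 = insert (F (R t).2 (R t).1) (R t).2 := by rw [hRsucc t]
              rw [this]
              exact Finset.mem_insert_of_mem (ih i (Nat.lt_succ_iff.mp hi'))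
        have hφmono : StrictMono φ := by
          apply strictMono_nat_of_lt_succ
          intro s
          have : φ (s+1) = F (R s).2 (R s).1 := rfl
          rw [this]
          exact hF1 _ _
        have hne0 : ∀ s, y (φ s) ≠ 0 := by
          intro s
          cases s with
          | zero => exact hF2 ∅ 0
          | succ t =>
            have : φ (t+1) = F (R t).2 (R t).1 := rfl
            rw [this]
            exact hF2 _ _
        have hyinj : ∀ i j, i < j → y (φ j) ≠ y (φ i) := by
          intro i j hij
          obtain ⟨t, rfl⟩ : ∃ t, j = t + 1 :=
            ⟨j - 1, (Nat.succ_pred_eq_of_pos (lt_of_le_of_lt (Nat.zero_le i) hij)).symm⟩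
          have : φ (t+1) = F (R t).2 (R t).1 := rfl
          rw [this]
          exact hF3 _ _ (φ i) (hmem t i (Nat.lt_succ_iff.mp hij))
        have hex : ∀ n, ∃ j, x j = y (φ n) := by
          intro n
          rcases hy (φ n) with h0 | hr
          · exact absurd h0 (hne0 n)
          · exact hr
        choose m hm using hex
        have hminj : Function.Injective m := by
          intro i j hij
          by_contra hne
          rcases lt_or_gt_of_ne hne with h | h
          · exact hyinj i j h (by rw [← hm i, ← hm j, hij])
          · exact hyinj j i h (by rw [← hm i, ← hm j, hij])
        refine ⟨0, Set.mem_insert _ _, φ, hφmono, ?_⟩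
        have heq : (fun n => y (φ n) - 0) = fun n => x (m n) := by
          funext n; rw [sub_zero, ← hm n]
        rw [heq]
        exact hx.1.comp_injective hp hminj
    have hcomp := H K hK hWPC
    by_contra hnn
    rw [NormNull, Metric.tendsto_atTop] at hnn
    push_neg at hnn
    obtain ⟨ε, hε, hfreq⟩ := hnn
    have hfr : ∃ᶠ n in atTop, ε ≤ ‖x n‖ := by
      rw [Filter.frequently_atTop]
      intro N
      obtain ⟨n, hn1, hn2⟩ := hfreq N
      refine ⟨n, hn1, ?_⟩
      rwa [Real.dist_eq, sub_zero, abs_of_nonneg (norm_nonneg _)] at hn2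
    obtain ⟨φ, hφ, hφε⟩ := Filter.extraction_of_frequently_atTop hfr
    obtain ⟨a, ha, ψ, hψ, hten⟩ := hcomp.tendsto_subseq
      (x := fun n => x (φ n)) (fun n => subset_closure (Set.mem_insert_iff.2 (Or.inr ⟨φ n, rfl⟩)))
    have hten' : Tendsto (fun n => x (φ (ψ n))) atTop (𝓝 a) := hten
    have ha0 : a = 0 := limit_eq_zero hp hx.1 ((hφ.comp hψ).injective) hten'
    have hεa : ε ≤ ‖a‖ := by
      have hnorm : Tendsto (fun n => ‖x (φ (ψ n))‖) atTop (𝓝 ‖a‖) := hten'.norm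
      exact ge_of_tendsto' hnorm (fun n => hφε (ψ n))
    rw [ha0, norm_zero] at hεa
    exact absurd hεa (not_le.mpr hε)
  exact ⟨⟨compA, compB⟩, ⟨compC, compD⟩⟩
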